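/- The function u(x,y) = cos(y/2)·(1 − cos(√3·x/2)) satisfies u_x + u_{xxx} + u_{xyy} = 0 at every (x,y) ∈ ℝ², and satisfies the boundary conditions u(x, −π) = u(x, π) = 0 for all x, and u(0,y) = u(4π/√3, y) = u_x(4π/√3, y) = 0 for all y. Consequently it is a stationary (non-decaying) solution of the linearized Zakharov–Kuznetsov equation u_t + u_x + u_{xxx} + u_{xyy} = 0 on the rectangle (0, 4π/√3) × (−π, π). -/

import Mathlib

private lemma hcos' (c x : ℝ) :
    HasDerivAt (fun t => Real.cos (c * t / 2)) (-Real.sin (c * x / 2) * (c / 2)) x := by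
  have h : HasDerivAt (fun t : ℝ => c * t / 2) (c / 2) x := by
    simpa using ((hasDerivAt_id x).const_mul c).div_const 2
  exact (Real.hasDerivAt_cos (c * x / 2)).comp x h

private lemma hsin' (c x : ℝ) :
    HasDerivAt (fun t => Real.sin (c * t / 2)) (Real.cos (c * x / 2) * (c / 2)) x := by
  have h : HasDerivAt (fun t : ℝ => c * t / 2) (c / 2) x := by
    simpa using ((hasDerivAt_id x).const_mul c).div_const 2
  exact (Real.hasDerivAt_sin (c * x / 2)).comp x h

private lemma hcosh (y : ℝ) :
    HasDerivAt (fun t : ℝ => Real.cos (t / 2)) (-Real.sin (y / 2) * (1 / 2)) y := by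
  have h : HasDerivAt (fun t : ℝ => t / 2) ((1:ℝ) / 2) y := by
    simpa using (hasDerivAt_id y).div_const 2
  exact (Real.hasDerivAt_cos (y / 2)).comp y h

private lemma hsinh (y : ℝ) :
    HasDerivAt (fun t : ℝ => Real.sin (t / 2)) (Real.cos (y / 2) * (1 / 2)) y := by
  have h : HasDerivAt (fun t : ℝ => t / 2) ((1:ℝ) / 2) y := by
    simpa using (hasDerivAt_id y).div_const 2
  exact (Real.hasDerivAt_sin (y / 2)).comp y h

private lemma dX (k c : ℝ) :
    deriv (fun t => k * (1 - Real.cos (c * t / 2)))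
      = fun x => (k * (c / 2)) * Real.sin (c * x / 2) := by
  funext x
  rw [show deriv (fun t => k * (1 - Real.cos (c * t / 2))) x = _ from
    (((hasDerivAt_const x (1:ℝ)).sub (hcos' c x)).const_mul k).deriv]
  ring

private lemma dSin (k c : ℝ) :
    deriv (fun t => k * Real.sin (c * t / 2))
      = fun x => (k * (c / 2)) * Real.cos (c * x / 2) := by
  funext x
  rw [((hsin' c x).const_mul k).deriv]
  ring

private lemma dCos (k c : ℝ) :
    deriv (fun t => k * Real.cos (c * t / 2))
      = fun x => (-(k * (c / 2))) * Real.sin (c * x / 2) := by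
  funext x
  rw [((hcos' c x).const_mul k).deriv]
  ring

private lemma d2y (k : ℝ) :
    deriv^[2] (fun t => Real.cos (t / 2) * k)
      = fun y => (-(1 / 4) * Real.cos (y / 2)) * k := by
  have h1 : deriv (fun t => Real.cos (t / 2) * k)
      = fun t => -Real.sin (t / 2) * (1 / 2) * k := by
    funext y
    rw [((hcosh y).mul_const k).deriv]
  funext y
  show deriv (deriv (fun t => Real.cos (t / 2) * k)) y = _
  rw [h1, show deriv (fun t => -Real.sin (t / 2) * (1 / 2) * k) y = _ from
    ((((hsinh y).neg).mul_const (1 / 2)).mul_const k).deriv]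
  ring

theorem stationary_solution_linearized_ZK :
    let u : ℝ → ℝ → ℝ := fun x y =>
      Real.cos (y / 2) * (1 - Real.cos (Real.sqrt 3 * x / 2))
    (∀ x y : ℝ,
      deriv (fun x' => u x' y) x + deriv^[3] (fun x' => u x' y) x
        + deriv (fun x' => deriv^[2] (fun y' => u x' y') y) x = 0) ∧
    (∀ x : ℝ, u x (-Real.pi) = 0 ∧ u x Real.pi = 0) ∧
    (∀ y : ℝ, u 0 y = 0 ∧ u (4 * Real.pi / Real.sqrt 3) y = 0 ∧
      deriv (fun x' => u x' y) (4 * Real.pi / Real.sqrt 3) = 0) ∧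
    (∀ x y t : ℝ,
      deriv (fun _ : ℝ => u x y) t + deriv (fun x' => u x' y) x
        + deriv^[3] (fun x' => u x' y) x
        + deriv (fun x' => deriv^[2] (fun y' => u x' y') y) x = 0) := by
  intro u
  have h3 : Real.sqrt 3 * Real.sqrt 3 = 3 := Real.mul_self_sqrt (by norm_num)
  have hs3 : Real.sqrt 3 ≠ 0 := by positivity
  set c := Real.sqrt 3 with hc
  have pde : ∀ x y : ℝ,
      deriv (fun x' => u x' y) x + deriv^[3] (fun x' => u x' y) x
        + deriv (fun x' => deriv^[2] (fun y' => u x' y') y) x = 0 := by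
    intro x y
    have e1 : (fun x' => u x' y)
        = fun t => Real.cos (y / 2) * (1 - Real.cos (c * t / 2)) := rfl
    have e2 : (fun x' => deriv^[2] (fun y' => u x' y') y)
        = fun t => (-(1 / 4) * Real.cos (y / 2)) * (1 - Real.cos (c * t / 2)) := by
      funext t
      show deriv^[2] (fun y' => Real.cos (y' / 2) * (1 - Real.cos (c * t / 2))) y = _
      rw [d2y]
    have e3 : deriv^[3] (fun x' => u x' y) x
        = deriv (deriv (deriv (fun x' => u x' y))) x := by
      simp [Function.iterate_succ', Function.comp]
    rw [e3, e1, e2, dX, dSin, dCos, dX]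
    linear_combination (-(Real.sin (c * x / 2) * Real.cos (y / 2) * c) / 8) * h3
  refine ⟨pde, ?_, ?_, ?_⟩
  · intro x
    constructor
    · show Real.cos (-Real.pi / 2) * _ = 0
      rw [neg_div, Real.cos_neg, Real.cos_pi_div_two, zero_mul]
    · show Real.cos (Real.pi / 2) * _ = 0
      rw [Real.cos_pi_div_two, zero_mul]
  · intro y
    have harg : c * (4 * Real.pi / c) / 2 = 2 * Real.pi := by
      field_simp
      ring
    refine ⟨?_, ?_, ?_⟩
    · show Real.cos (y / 2) * (1 - Real.cos (c * 0 / 2)) = 0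
      simp
    · show Real.cos (y / 2) * (1 - Real.cos (c * (4 * Real.pi / c) / 2)) = 0
      rw [harg, Real.cos_two_pi]
      ring
    · have e1 : (fun x' => u x' y)
          = fun t => Real.cos (y / 2) * (1 - Real.cos (c * t / 2)) := rfl
      rw [e1, dX]
      show _ * Real.sin (c * (4 * Real.pi / c) / 2) = 0
      rw [harg, Real.sin_two_pi, mul_zero]
  · intro x y t
    rw [deriv_const]
    simpa using pde x y
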